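/- Let X, A be finite sets. Let ρ be a probability measure on X, π^E, π^A kernels from X to distributions on A, and P a stochastic kernel from X × A × Δ(X) to Δ(X), where ρ-entries influence P. Assume P is L_P-Lipschitz in its distribution argument in L1: for all x, a and distributions ρ₁, ρ₂, ∑_{x'} |P(x'|x,a,ρ₁) − P(x'|x,a,ρ₂)| ≤ L_P·∑_x |ρ₁(x) − ρ₂(x)|. Let ρ₁, ρ₂ be two distributions on X, and let ν_i(x') = ∑_{x,a} ρ_i(x)π^i(a|x,ρ_i)P(x'|x,a,ρ_i) for i = 1,2 with π¹ = π^A evaluated at ρ₁ and π² = π^E evaluated at ρ₂, where π^A is L_E-Lipschitz in the distribution argument: ∑_x ρ₂(x)∑_a |π^A(a|x,ρ₁) − π^A(a|x,ρ₂)| ≤ L_E·∑_x|ρ₁(x) − ρ₂(x)|. Assume the instantaneous imitation error δ := ∑_x ρ₂(x)∑_a |π^A(a|x,ρ₂) − π^E(a|x,ρ₂)|. Then ∑_{x'} |ν₁(x') − ν₂(x')| ≤ (1 + L_E + L_P)·∑_x |ρ₁(x) − ρ₂(x)| + δ. -/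

import Mathlib

open Finset

theorem one_step_meanfield_propagation {X A : Type*} [Fintype X] [Fintype A]
    (LP LE δ : ℝ)
    (ρ₁ ρ₂ : X → ℝ)
    (πA πE : X → (X → ℝ) → A → ℝ)
    (P : X → A → (X → ℝ) → X → ℝ)
    (hρ₁ : ∀ x, 0 ≤ ρ₁ x) (hρ₁s : ∑ x, ρ₁ x = 1)
    (hρ₂ : ∀ x, 0 ≤ ρ₂ x) (hρ₂s : ∑ x, ρ₂ x = 1)
    (hπA : ∀ x ρ a, 0 ≤ πA x ρ a) (hπAs : ∀ x ρ, ∑ a, πA x ρ a = 1)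
    (hπE : ∀ x ρ a, 0 ≤ πE x ρ a) (hπEs : ∀ x ρ, ∑ a, πE x ρ a = 1)
    (hP : ∀ x a ρ, (∀ x', 0 ≤ P x a ρ x') ∧ ∑ x', P x a ρ x' = 1)
    (hPLip : ∀ x a (σ₁ σ₂ : X → ℝ),
      ∑ x', |P x a σ₁ x' - P x a σ₂ x'| ≤ LP * ∑ y, |σ₁ y - σ₂ y|)
    (hπALip : ∑ x, ρ₂ x * ∑ a, |πA x ρ₁ a - πA x ρ₂ a| ≤
      LE * ∑ y, |ρ₁ y - ρ₂ y|)
    (hδ : δ = ∑ x, ρ₂ x * ∑ a, |πA x ρ₂ a - πE x ρ₂ a|) :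
    ∑ x', |(∑ x, ∑ a, ρ₁ x * πA x ρ₁ a * P x a ρ₁ x') -
           (∑ x, ∑ a, ρ₂ x * πE x ρ₂ a * P x a ρ₂ x')| ≤
      (1 + LE + LP) * ∑ y, |ρ₁ y - ρ₂ y| + δ := by
  set D : ℝ := ∑ y, |ρ₁ y - ρ₂ y| with hDdef
  have key : ∀ x', |(∑ x, ∑ a, ρ₁ x * πA x ρ₁ a * P x a ρ₁ x') -
           (∑ x, ∑ a, ρ₂ x * πE x ρ₂ a * P x a ρ₂ x')| ≤
      ∑ x, ∑ a, (|ρ₁ x - ρ₂ x| * πA x ρ₁ a * P x a ρ₁ x'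
        + ρ₂ x * |πA x ρ₁ a - πA x ρ₂ a| * P x a ρ₁ x'
        + ρ₂ x * |πA x ρ₂ a - πE x ρ₂ a| * P x a ρ₁ x'
        + ρ₂ x * πE x ρ₂ a * |P x a ρ₁ x' - P x a ρ₂ x'|) := by
    intro x'
    rw [← Finset.sum_sub_distrib]
    refine (Finset.abs_sum_le_sum_abs _ _).trans (Finset.sum_le_sum fun x _ => ?_)
    rw [← Finset.sum_sub_distrib]
    refine (Finset.abs_sum_le_sum_abs _ _).trans (Finset.sum_le_sum fun a _ => ?_)
    have hsplit : ρ₁ x * πA x ρ₁ a * P x a ρ₁ x' - ρ₂ x * πE x ρ₂ a * P x a ρ₂ x'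
      = ((ρ₁ x - ρ₂ x) * πA x ρ₁ a * P x a ρ₁ x'
        + ρ₂ x * (πA x ρ₁ a - πA x ρ₂ a) * P x a ρ₁ x')
        + ρ₂ x * (πA x ρ₂ a - πE x ρ₂ a) * P x a ρ₁ x'
        + ρ₂ x * πE x ρ₂ a * (P x a ρ₁ x' - P x a ρ₂ x') := by ring
    rw [hsplit]
    have hPnn := (hP x a ρ₁).1 x'
    have t1 : |(ρ₁ x - ρ₂ x) * πA x ρ₁ a * P x a ρ₁ x'|
        = |ρ₁ x - ρ₂ x| * πA x ρ₁ a * P x a ρ₁ x' := by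
      rw [abs_mul, abs_mul, abs_of_nonneg (hπA x ρ₁ a), abs_of_nonneg hPnn]
    have t2 : |ρ₂ x * (πA x ρ₁ a - πA x ρ₂ a) * P x a ρ₁ x'|
        = ρ₂ x * |πA x ρ₁ a - πA x ρ₂ a| * P x a ρ₁ x' := by
      rw [abs_mul, abs_mul, abs_of_nonneg (hρ₂ x), abs_of_nonneg hPnn]
    have t3 : |ρ₂ x * (πA x ρ₂ a - πE x ρ₂ a) * P x a ρ₁ x'|
        = ρ₂ x * |πA x ρ₂ a - πE x ρ₂ a| * P x a ρ₁ x' := by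
      rw [abs_mul, abs_mul, abs_of_nonneg (hρ₂ x), abs_of_nonneg hPnn]
    have t4 : |ρ₂ x * πE x ρ₂ a * (P x a ρ₁ x' - P x a ρ₂ x')|
        = ρ₂ x * πE x ρ₂ a * |P x a ρ₁ x' - P x a ρ₂ x'| := by
      rw [abs_mul, abs_mul, abs_of_nonneg (hρ₂ x), abs_of_nonneg (hπE x ρ₂ a)]
    refine le_trans (abs_add_le _ _) ?_
    rw [t4]
    refine le_trans (add_le_add_left (abs_add_le _ _) _) ?_
    rw [t3]
    refine le_trans (add_le_add_left (add_le_add_left (abs_add_le _ _) _) _) ?_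
    rw [t1, t2]
  calc ∑ x', |(∑ x, ∑ a, ρ₁ x * πA x ρ₁ a * P x a ρ₁ x') -
           (∑ x, ∑ a, ρ₂ x * πE x ρ₂ a * P x a ρ₂ x')|
      ≤ ∑ x', ∑ x, ∑ a, (|ρ₁ x - ρ₂ x| * πA x ρ₁ a * P x a ρ₁ x'
        + ρ₂ x * |πA x ρ₁ a - πA x ρ₂ a| * P x a ρ₁ x'
        + ρ₂ x * |πA x ρ₂ a - πE x ρ₂ a| * P x a ρ₁ x'
        + ρ₂ x * πE x ρ₂ a * |P x a ρ₁ x' - P x a ρ₂ x'|) :=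
        Finset.sum_le_sum fun x' _ => key x'
    _ = ∑ x, ∑ a, ∑ x', (|ρ₁ x - ρ₂ x| * πA x ρ₁ a * P x a ρ₁ x'
        + ρ₂ x * |πA x ρ₁ a - πA x ρ₂ a| * P x a ρ₁ x'
        + ρ₂ x * |πA x ρ₂ a - πE x ρ₂ a| * P x a ρ₁ x'
        + ρ₂ x * πE x ρ₂ a * |P x a ρ₁ x' - P x a ρ₂ x'|) := by
        rw [Finset.sum_comm]
        exact Finset.sum_congr rfl fun x _ => Finset.sum_comm
    _ = ∑ x, ∑ a, (|ρ₁ x - ρ₂ x| * πA x ρ₁ a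
        + ρ₂ x * |πA x ρ₁ a - πA x ρ₂ a|
        + ρ₂ x * |πA x ρ₂ a - πE x ρ₂ a|
        + ρ₂ x * πE x ρ₂ a * ∑ x', |P x a ρ₁ x' - P x a ρ₂ x'|) := by
        refine Finset.sum_congr rfl fun x _ => Finset.sum_congr rfl fun a _ => ?_
        rw [Finset.sum_add_distrib, Finset.sum_add_distrib, Finset.sum_add_distrib,
          ← Finset.mul_sum, ← Finset.mul_sum, ← Finset.mul_sum, ← Finset.mul_sum,
          (hP x a ρ₁).2, mul_one, mul_one, mul_one]
    _ ≤ ∑ x, ∑ a, (|ρ₁ x - ρ₂ x| * πA x ρ₁ a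
        + ρ₂ x * |πA x ρ₁ a - πA x ρ₂ a|
        + ρ₂ x * |πA x ρ₂ a - πE x ρ₂ a|
        + ρ₂ x * πE x ρ₂ a * (LP * D)) := by
        refine Finset.sum_le_sum fun x _ => Finset.sum_le_sum fun a _ => ?_
        gcongr
        · exact mul_nonneg (hρ₂ x) (hπE x ρ₂ a)
        · exact hPLip x a ρ₁ ρ₂
    _ = D + (∑ x, ρ₂ x * ∑ a, |πA x ρ₁ a - πA x ρ₂ a|)
        + (∑ x, ρ₂ x * ∑ a, |πA x ρ₂ a - πE x ρ₂ a|) + LP * D := by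
        simp only [Finset.sum_add_distrib]
        rw [hDdef]
        congr 1
        · congr 1
          · congr 1
            · refine Finset.sum_congr rfl fun x _ => ?_
              rw [← Finset.mul_sum, hπAs x ρ₁, mul_one]
            · exact Finset.sum_congr rfl fun x _ => (Finset.mul_sum _ _ _).symm
          · exact Finset.sum_congr rfl fun x _ => (Finset.mul_sum _ _ _).symm
        · have : ∀ x, ∑ a, ρ₂ x * πE x ρ₂ a * (LP * D) = ρ₂ x * (LP * D) := by
            intro x
            rw [← Finset.sum_mul, ← Finset.mul_sum, hπEs x ρ₂, mul_one]
          rw [Finset.sum_congr rfl fun x _ => this x, ← Finset.sum_mul, hρ₂s, one_mul]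
    _ ≤ D + LE * D + δ + LP * D := by
        exact add_le_add (add_le_add (add_le_add le_rfl hπALip)
          (le_of_eq hδ.symm)) le_rfl
    _ = (1 + LE + LP) * D + δ := by ring
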